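/- Let G be a finite group, R a commutative ring, H, V, W ≤ G subgroups, and s, t ∈ R. Then the modified Mackey formula holds: (|(G/V)^H| · s^{(V:H)}) · (|(G/W)^H| · t^{(W:H)}) = Σ_{VgW ∈ V\G/W} |(G/(V ∩ gWg⁻¹))^H| · (s^{(V : V ∩ gWg⁻¹)} · t^{(W : g⁻¹Vg ∩ W)})^{(V ∩ gWg⁻¹ : H)}, where the sum is over a set of representatives g of the double cosets V\G/W, the exponent (K:L) means |K|/|L|, and any summand whose fixed-point count |(G/K)^H| vanishes (which happens unless some conjugate of H is contained in K) is zero. -/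

import Mathlib

open MulAction Pointwise

namespace ModMackey

variable {G : Type*} [Group G]

/-- preimage in `G` of the `H`-fixed points of `G ⧸ K`. -/
def fixSet (H K : Subgroup G) : Set G :=
  QuotientGroup.mk ⁻¹' (MulAction.fixedPoints H (G ⧸ K))

lemma mem_fixSet {H K : Subgroup G} {g : G} :
    g ∈ fixSet H K ↔ ∀ h ∈ H, g⁻¹ * h * g ∈ K := by
  constructor
  · intro hg h hh
    have h1 : (⟨h⁻¹, H.inv_mem hh⟩ : H) • (QuotientGroup.mk g : G ⧸ K) = QuotientGroup.mk g :=
      hg ⟨h⁻¹, H.inv_mem hh⟩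
    erw [Subgroup.smul_def] at h1
    rw [MulAction.Quotient.smul_mk, QuotientGroup.eq, smul_eq_mul] at h1
    simpa [mul_assoc] using h1
  · intro hg
    intro m
    obtain ⟨h, hh⟩ := m
    erw [Subgroup.smul_def]
    rw [MulAction.Quotient.smul_mk, QuotientGroup.eq, smul_eq_mul]
    have := hg h⁻¹ (H.inv_mem hh)
    simpa [mul_assoc] using this

lemma card_fixSet (H K : Subgroup G) :
    Nat.card (fixSet H K) =
      Nat.card K * Nat.card (MulAction.fixedPoints H (G ⧸ K)) := by
  rw [fixSet, Nat.card_congr (QuotientGroup.preimageMkEquivSubgroupProdSet K _), Nat.card_prod]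

lemma mem_fixSet_smul_iff {H K : Subgroup G} {c g : G} :
    g ∈ fixSet H (ConjAct.toConjAct c • K) ↔ g * c ∈ fixSet H K := by
  simp only [mem_fixSet, Subgroup.mem_pointwise_smul_iff_inv_smul_mem, ← ConjAct.toConjAct_inv,
    ConjAct.smul_def, ConjAct.ofConjAct_toConjAct]
  refine forall₂_congr fun h hh => ?_
  have : c⁻¹ * (g⁻¹ * h * g) * c⁻¹⁻¹ = (g * c)⁻¹ * h * (g * c) := by group
  rw [this]

lemma card_fixSet_smul (H K : Subgroup G) (c : G) :
    Nat.card (fixSet H (ConjAct.toConjAct c • K)) = Nat.card (fixSet H K) := by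
  exact Nat.card_congr (Equiv.subtypeEquiv (Equiv.mulRight c) fun g => mem_fixSet_smul_iff)


variable (H V W : Subgroup G)

lemma fst_mem {g a : G} (ha : a ∈ fixSet H (V ⊓ ConjAct.toConjAct g • W)) :
    a ∈ fixSet H V := by
  rw [mem_fixSet] at ha ⊢
  exact fun h hh => ((Subgroup.mem_inf).1 (ha h hh)).1

lemma snd_mem {g a : G} (ha : a ∈ fixSet H (V ⊓ ConjAct.toConjAct g • W)) :
    a * g ∈ fixSet H W := by
  rw [mem_fixSet] at ha ⊢
  intro h hh
  have h2 := ((Subgroup.mem_inf).1 (ha h hh)).2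
  rw [Subgroup.mem_pointwise_smul_iff_inv_smul_mem, ← ConjAct.toConjAct_inv,
    ConjAct.smul_def, ConjAct.ofConjAct_toConjAct] at h2
  have : g⁻¹ * (a⁻¹ * h * a) * g⁻¹⁻¹ = (a * g)⁻¹ * h * (a * g) := by group
  rwa [this] at h2

lemma pair_mem {a b : G} (haV : a ∈ fixSet H V) (hbW : b ∈ fixSet H W) :
    a ∈ fixSet H (V ⊓ ConjAct.toConjAct (a⁻¹ * b) • W) := by
  rw [mem_fixSet] at haV hbW ⊢
  intro h hh
  rw [Subgroup.mem_inf]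
  refine ⟨haV h hh, ?_⟩
  rw [Subgroup.mem_pointwise_smul_iff_inv_smul_mem, ← ConjAct.toConjAct_inv,
    ConjAct.smul_def, ConjAct.ofConjAct_toConjAct]
  have : (a⁻¹ * b)⁻¹ * (a⁻¹ * h * a) * (a⁻¹ * b)⁻¹⁻¹ = b⁻¹ * h * b := by group
  rw [this]
  exact hbW h hh

lemma sigma_bij : Function.Bijective
    (fun x : (Σ g : G, fixSet H (V ⊓ ConjAct.toConjAct g • W)) =>
      ((⟨x.2.1, fst_mem H V W x.2.2⟩, ⟨x.2.1 * x.1, snd_mem H V W x.2.2⟩) :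
        fixSet H V × fixSet H W)) := by
  constructor
  · rintro ⟨g, a, ha⟩ ⟨g', a', ha'⟩ h
    simp only [Prod.mk.injEq, Subtype.mk.injEq] at h
    obtain ⟨h1, h2⟩ := h
    subst h1
    obtain rfl : g = g' := mul_left_cancel h2
    rfl
  · rintro ⟨⟨a, haV⟩, ⟨b, hbW⟩⟩
    refine ⟨⟨a⁻¹ * b, a, pair_mem H V W haV hbW⟩, ?_⟩
    simp [mul_inv_cancel_left]

lemma nat_card_sigma' {ι : Type*} [Fintype ι] (f : ι → Type*) [∀ i, Finite (f i)] :
    Nat.card (Σ i, f i) = ∑ i, Nat.card (f i) := by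
  letI : ∀ i, Fintype (f i) := fun i => Fintype.ofFinite _
  simp [Nat.card_eq_fintype_card]

lemma card_fixSet_mul_card_fixSet [Fintype G] :
    Nat.card (fixSet H V) * Nat.card (fixSet H W) =
      ∑ g : G, Nat.card (fixSet H (V ⊓ ConjAct.toConjAct g • W)) := by
  classical
  rw [← Nat.card_prod, ← Nat.card_congr (Equiv.ofBijective _ (sigma_bij H V W)),
    nat_card_sigma']


lemma conj_mem_iff {K : Subgroup G} {k : G} (hk : k ∈ K) (x : G) :
    k⁻¹ * x * k ∈ K ↔ x ∈ K := by
  constructor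
  · intro h
    have h2 := K.mul_mem (K.mul_mem hk h) (K.inv_mem hk)
    simpa [mul_assoc] using h2
  · intro h
    exact K.mul_mem (K.mul_mem (K.inv_mem hk) h) hk

lemma conj_smul_self {K : Subgroup G} {k : G} (hk : k ∈ K) :
    ConjAct.toConjAct k • K = K := by
  ext x
  rw [Subgroup.mem_pointwise_smul_iff_inv_smul_mem, ← ConjAct.toConjAct_inv,
    ConjAct.smul_def, ConjAct.ofConjAct_toConjAct, inv_inv]
  exact conj_mem_iff hk x

lemma stabilizer_eq (g : G) :
    MulAction.stabilizer V (QuotientGroup.mk g : G ⧸ W) =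
      (V ⊓ ConjAct.toConjAct g • W).subgroupOf V := by
  ext v
  simp only [MulAction.mem_stabilizer_iff, Subgroup.mem_subgroupOf, Subgroup.mem_inf,
    SetLike.coe_mem, true_and]
  erw [Subgroup.smul_def]
  rw [MulAction.Quotient.smul_mk, QuotientGroup.eq, smul_eq_mul,
    Subgroup.mem_pointwise_smul_iff_inv_smul_mem, ← ConjAct.toConjAct_inv,
    ConjAct.smul_def, ConjAct.ofConjAct_toConjAct, inv_inv]
  rw [show ((v : G) * g)⁻¹ * g = g⁻¹ * (v : G)⁻¹ * g by group]
  rw [show g⁻¹ * (v : G) * g = (g⁻¹ * (v : G)⁻¹ * g)⁻¹ by group]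
  exact (W.inv_mem_iff).symm

lemma card_doset [Fintype G] (g : G) :
    Nat.card (DoubleCoset.doubleCoset g (V : Set G) (W : Set G)) *
      Nat.card (V ⊓ ConjAct.toConjAct g • W : Subgroup G) = Nat.card V * Nat.card W := by
  have h1 : DoubleCoset.doubleCoset g (V : Set G) (W : Set G) = (V : Set G) * {g} * (W : Set G) := rfl
  have himg : (QuotientGroup.mk '' ((V : Set G) * {g}) : Set (G ⧸ W)) =
      MulAction.orbit V (QuotientGroup.mk g : G ⧸ W) := by
    ext x
    simp only [Set.mem_image, Set.mul_singleton, Set.mem_image, SetLike.mem_coe,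
      MulAction.mem_orbit_iff]
    constructor
    · rintro ⟨y, ⟨v, hv, rfl⟩, rfl⟩
      exact ⟨⟨v, hv⟩, by erw [Subgroup.smul_def]; rw [MulAction.Quotient.smul_mk, smul_eq_mul]⟩
    · rintro ⟨⟨v, hv⟩, rfl⟩
      exact ⟨v * g, ⟨v, hv, rfl⟩,
        by erw [Subgroup.smul_def]; rw [MulAction.Quotient.smul_mk, smul_eq_mul]⟩
  have h2 := Subgroup.card_mul_eq_card_subgroup_mul_card_quotient W ((V : Set G) * {g})
  rw [h1, h2]
  rw [show Set.image ((↑) : G → G ⧸ W) ((V : Set G) * {g}) =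
    (QuotientGroup.mk '' ((V : Set G) * {g}) : Set (G ⧸ W)) from rfl, himg]
  have h3 : Nat.card (MulAction.orbit V (QuotientGroup.mk g : G ⧸ W)) =
      Nat.card (V ⧸ MulAction.stabilizer V (QuotientGroup.mk g : G ⧸ W)) :=
    Nat.card_congr (MulAction.orbitEquivQuotientStabilizer V _)
  have h4 : Nat.card (MulAction.stabilizer V (QuotientGroup.mk g : G ⧸ W)) =
      Nat.card (V ⊓ ConjAct.toConjAct g • W : Subgroup G) := by
    rw [stabilizer_eq]
    exact Nat.card_congr (Subgroup.subgroupOfEquivOfLe inf_le_left).toEquiv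
  have h5 := Subgroup.card_eq_card_quotient_mul_card_subgroup
    (MulAction.stabilizer V (QuotientGroup.mk g : G ⧸ W))
  rw [h3, mul_assoc, ← h4, ← h5]
  ring


lemma smul_self_of_mem {v : G} (hv : v ∈ V) : ConjAct.toConjAct v • V = V :=
  conj_smul_self hv

lemma inf_conj {v g w : G} (hv : v ∈ V) (hw : w ∈ W) :
    V ⊓ ConjAct.toConjAct (v * g * w) • W =
      ConjAct.toConjAct v • (V ⊓ ConjAct.toConjAct g • W) := by
  rw [Subgroup.smul_inf, conj_smul_self hv]
  congr 1
  rw [smul_smul, ← map_mul]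
  have : v * g * w = (v * g) * w := by group
  rw [this, map_mul, mul_smul, conj_smul_self hw, map_mul, mul_smul]

lemma constancy [Fintype G] (g : G) :
    Nat.card (fixSet H (V ⊓ ConjAct.toConjAct g • W)) =
      Nat.card (fixSet H
        (V ⊓ ConjAct.toConjAct (Quotient.out (DoubleCoset.mk V W g)) • W)) := by
  obtain ⟨h, k, hh, hk, heq⟩ := DoubleCoset.mk_out_eq_mul V W g
  rw [heq, inf_conj V W hh hk, card_fixSet_smul]

lemma sum_fiber {α κ : Type*} [Fintype α] [Fintype κ] (φ : α → κ) (m : κ → ℕ) :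
    ∑ a : α, m (φ a) = ∑ k : κ, Nat.card {a : α // φ a = k} * m k := by
  classical
  rw [← Finset.sum_fiberwise Finset.univ φ (fun a => m (φ a))]
  refine Finset.sum_congr rfl fun k _ => ?_
  have h1 : ∑ a ∈ Finset.univ.filter (φ · = k), m (φ a)
      = ∑ _a ∈ Finset.univ.filter (φ · = k), m k :=
    Finset.sum_congr rfl fun a ha => by rw [(Finset.mem_filter.1 ha).2]
  rw [h1, Finset.sum_const, smul_eq_mul, Nat.card_eq_fintype_card, Fintype.card_subtype]

noncomputable def fiberEquiv (C : DoubleCoset.Quotient (V : Set G) (W : Set G)) :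
    {g : G // DoubleCoset.mk V W g = C} ≃ (DoubleCoset.doubleCoset (Quotient.out C) (V : Set G) (W : Set G)) := by
  refine Equiv.subtypeEquivRight fun g => ?_
  constructor
  · intro hg
    subst hg
    obtain ⟨h, k, hh, hk, heq⟩ := DoubleCoset.mk_out_eq_mul V W g
    rw [DoubleCoset.mem_doubleCoset]
    exact ⟨h⁻¹, V.inv_mem hh, k⁻¹, W.inv_mem hk, by rw [heq]; group⟩
  · intro hg
    rw [DoubleCoset.mem_doubleCoset] at hg
    obtain ⟨h, hh, k, hk, heq⟩ := hg
    rw [← DoubleCoset.out_eq' V W C]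
    exact (DoubleCoset.eq V W g _).2 ⟨h⁻¹, V.inv_mem hh, k⁻¹, W.inv_mem hk, by rw [heq]; group⟩


lemma mackey_count [Fintype G] :
    Nat.card (MulAction.fixedPoints H (G ⧸ V)) * Nat.card (MulAction.fixedPoints H (G ⧸ W)) =
      ∑ᶠ C : DoubleCoset.Quotient (V : Set G) (W : Set G),
        Nat.card (MulAction.fixedPoints H
          (G ⧸ (V ⊓ ConjAct.toConjAct (Quotient.out C) • W))) := by
  classical
  haveI : Finite (DoubleCoset.Quotient (V : Set G) (W : Set G)) :=
    Finite.of_surjective (fun g : G => DoubleCoset.mk V W g)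
      fun C => ⟨Quotient.out C, DoubleCoset.out_eq' V W C⟩
  letI : Fintype (DoubleCoset.Quotient (V : Set G) (W : Set G)) := Fintype.ofFinite _
  rw [finsum_eq_sum_of_fintype]
  have hpos : 0 < Nat.card V * Nat.card W := Nat.mul_pos Nat.card_pos Nat.card_pos
  apply Nat.eq_of_mul_eq_mul_right hpos
  calc Nat.card (MulAction.fixedPoints H (G ⧸ V)) * Nat.card (MulAction.fixedPoints H (G ⧸ W)) *
        (Nat.card V * Nat.card W)
      = (Nat.card V * Nat.card (MulAction.fixedPoints H (G ⧸ V))) *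
        (Nat.card W * Nat.card (MulAction.fixedPoints H (G ⧸ W))) := by ring
    _ = Nat.card (fixSet H V) * Nat.card (fixSet H W) := by
        rw [card_fixSet, card_fixSet]
    _ = ∑ g : G, Nat.card (fixSet H (V ⊓ ConjAct.toConjAct g • W)) :=
        card_fixSet_mul_card_fixSet H V W
    _ = ∑ g : G, (fun C : DoubleCoset.Quotient (V : Set G) (W : Set G) =>
          Nat.card (fixSet H (V ⊓ ConjAct.toConjAct (Quotient.out C) • W))) (DoubleCoset.mk V W g) :=
        Finset.sum_congr rfl fun g _ => constancy H V W g
    _ = ∑ C : DoubleCoset.Quotient (V : Set G) (W : Set G),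
          Nat.card {g : G // DoubleCoset.mk V W g = C} *
            Nat.card (fixSet H (V ⊓ ConjAct.toConjAct (Quotient.out C) • W)) :=
        by exact sum_fiber (DoubleCoset.mk V W) (fun C => Nat.card (fixSet H (V ⊓ ConjAct.toConjAct (Quotient.out C) • W)))
    _ = ∑ C : DoubleCoset.Quotient (V : Set G) (W : Set G),
          Nat.card (MulAction.fixedPoints H
            (G ⧸ (V ⊓ ConjAct.toConjAct (Quotient.out C) • W))) * (Nat.card V * Nat.card W) := by
        refine Finset.sum_congr rfl fun C _ => ?_
        rw [Nat.card_congr (fiberEquiv V W C), card_fixSet, ← mul_assoc,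
          card_doset V W (Quotient.out C)]
        ring
    _ = (∑ C : DoubleCoset.Quotient (V : Set G) (W : Set G),
          Nat.card (MulAction.fixedPoints H
            (G ⧸ (V ⊓ ConjAct.toConjAct (Quotient.out C) • W)))) * (Nat.card V * Nat.card W) := by
        rw [Finset.sum_mul]

lemma card_dvd_of_fix [Finite G] {H K : Subgroup G}
    (hne : Nat.card (MulAction.fixedPoints H (G ⧸ K)) ≠ 0) :
    Nat.card H ∣ Nat.card K := by
  have hne2 : Nonempty (MulAction.fixedPoints H (G ⧸ K)) := by
    by_contra hc
    rw [not_nonempty_iff] at hc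
    exact hne (Nat.card_of_isEmpty)
  obtain ⟨x, hx⟩ := hne2
  obtain ⟨g, rfl⟩ := QuotientGroup.mk_surjective x
  have hg : g ∈ fixSet H K := hx
  rw [mem_fixSet] at hg
  have hle : H ≤ ConjAct.toConjAct g • K := by
    intro h hh
    rw [Subgroup.mem_pointwise_smul_iff_inv_smul_mem, ← ConjAct.toConjAct_inv,
      ConjAct.smul_def, ConjAct.ofConjAct_toConjAct, inv_inv]
    exact hg h hh
  have := Subgroup.card_dvd_of_le hle
  rwa [← Nat.card_congr (Subgroup.equivSMul (ConjAct.toConjAct g) K).toEquiv] at this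


lemma div_helper {h k v : ℕ} (hk : 0 < k) (h1 : h ∣ k) (h2 : k ∣ v) :
    v / k * (k / h) = v / h := by
  rw [Nat.div_mul_div_comm h2 h1, mul_comm v k, Nat.mul_div_mul_left _ _ hk]

end ModMackey

/-- **Modified Mackey formula.**  For subgroups `H, V, W` of a finite group `G` and
elements `s, t` of a commutative ring `R`,
`(|(G/V)^H| s^{(V:H)}) · (|(G/W)^H| t^{(W:H)})
  = Σ_{VgW ∈ V\G/W} |(G/(V ∩ gWg⁻¹))^H| (s^{(V:V∩gWg⁻¹)} t^{(W:g⁻¹Vg∩W)})^{(V∩gWg⁻¹:H)}`,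
the sum being taken over representatives `g` of the double cosets `V\G/W`. -/
theorem modified_mackey_formula (G : Type u) [Group G] [Fintype G]
    (R : Type v) [CommRing R] (H V W : Subgroup G) (s t : R) :
    ((Nat.card (MulAction.fixedPoints H (G ⧸ V)) : R) *
        s ^ (Nat.card V / Nat.card H)) *
      ((Nat.card (MulAction.fixedPoints H (G ⧸ W)) : R) *
        t ^ (Nat.card W / Nat.card H)) =
    ∑ᶠ C : DoubleCoset.Quotient (V : Set G) (W : Set G),
      (Nat.card (MulAction.fixedPoints H
          (G ⧸ (V ⊓ ConjAct.toConjAct (Quotient.out C) • W))) : R) *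
        (s ^ (Nat.card V /
              Nat.card ((V ⊓ ConjAct.toConjAct (Quotient.out C) • W : Subgroup G))) *
         t ^ (Nat.card W /
              Nat.card ((ConjAct.toConjAct (Quotient.out C)⁻¹ • V ⊓ W : Subgroup G)))) ^
          (Nat.card ((V ⊓ ConjAct.toConjAct (Quotient.out C) • W : Subgroup G)) / Nat.card H) := by
  classical
  haveI : Finite (DoubleCoset.Quotient (V : Set G) (W : Set G)) :=
    Finite.of_surjective (fun g : G => DoubleCoset.mk V W g)
      fun C => ⟨Quotient.out C, DoubleCoset.out_eq' V W C⟩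
  letI : Fintype (DoubleCoset.Quotient (V : Set G) (W : Set G)) := Fintype.ofFinite _
  have hcount := ModMackey.mackey_count H V W
  rw [finsum_eq_sum_of_fintype] at hcount
  rw [finsum_eq_sum_of_fintype]
  calc ((Nat.card (MulAction.fixedPoints H (G ⧸ V)) : R) * s ^ (Nat.card V / Nat.card H)) *
        ((Nat.card (MulAction.fixedPoints H (G ⧸ W)) : R) * t ^ (Nat.card W / Nat.card H))
      = ((Nat.card (MulAction.fixedPoints H (G ⧸ V)) *
            Nat.card (MulAction.fixedPoints H (G ⧸ W)) : ℕ) : R) *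
          (s ^ (Nat.card V / Nat.card H) * t ^ (Nat.card W / Nat.card H)) := by
        push_cast; ring
    _ = ∑ C : DoubleCoset.Quotient (V : Set G) (W : Set G),
          (Nat.card (MulAction.fixedPoints H
              (G ⧸ (V ⊓ ConjAct.toConjAct (Quotient.out C) • W))) : R) *
            (s ^ (Nat.card V / Nat.card H) * t ^ (Nat.card W / Nat.card H)) := by
        rw [hcount]; push_cast; rw [Finset.sum_mul]
    _ = ∑ C : DoubleCoset.Quotient (V : Set G) (W : Set G),
          (Nat.card (MulAction.fixedPoints H
              (G ⧸ (V ⊓ ConjAct.toConjAct (Quotient.out C) • W))) : R) *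
            (s ^ (Nat.card V /
                  Nat.card ((V ⊓ ConjAct.toConjAct (Quotient.out C) • W : Subgroup G))) *
             t ^ (Nat.card W /
                  Nat.card ((ConjAct.toConjAct (Quotient.out C)⁻¹ • V ⊓ W : Subgroup G)))) ^
              (Nat.card ((V ⊓ ConjAct.toConjAct (Quotient.out C) • W : Subgroup G)) /
                Nat.card H) := by
        refine Finset.sum_congr rfl fun C _ => ?_
        by_cases h0 : Nat.card (MulAction.fixedPoints H
            (G ⧸ (V ⊓ ConjAct.toConjAct (Quotient.out C) • W))) = 0
        · rw [h0]; simp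
        · congr 1
          have hHK := ModMackey.card_dvd_of_fix h0
          have hKV : Nat.card (V ⊓ ConjAct.toConjAct (Quotient.out C) • W : Subgroup G) ∣
              Nat.card V := Subgroup.card_dvd_of_le inf_le_left
          have hswap : (ConjAct.toConjAct (Quotient.out C)⁻¹ • V ⊓ W : Subgroup G) =
              ConjAct.toConjAct (Quotient.out C)⁻¹ •
                (V ⊓ ConjAct.toConjAct (Quotient.out C) • W) := by
            rw [Subgroup.smul_inf, smul_smul, ← map_mul, inv_mul_cancel, map_one, one_smul]
          have hcard' : Nat.card (ConjAct.toConjAct (Quotient.out C)⁻¹ • V ⊓ W : Subgroup G) =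
              Nat.card (V ⊓ ConjAct.toConjAct (Quotient.out C) • W : Subgroup G) := by
            rw [hswap]
            exact (Nat.card_congr (Subgroup.equivSMul _ _).toEquiv).symm
          have hK'W : Nat.card (ConjAct.toConjAct (Quotient.out C)⁻¹ • V ⊓ W : Subgroup G) ∣
              Nat.card W := Subgroup.card_dvd_of_le inf_le_right
          have hKW : Nat.card (V ⊓ ConjAct.toConjAct (Quotient.out C) • W : Subgroup G) ∣
              Nat.card W := hcard' ▸ hK'W
          rw [mul_pow, ← pow_mul, ← pow_mul, hcard',
            ModMackey.div_helper Nat.card_pos hHK hKV,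
            ModMackey.div_helper Nat.card_pos hHK hKW]
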